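/- Let p and q be polynomials with complex coefficients, not both zero, let α, β > 0 with α ≠ β, and let λ ∈ ℝ. If the function Φ(x) := (p(x) e^{-α x²/2}, q(x) e^{-β x²/2}) satisfies -B·Φ''(x) + x²·A·Φ(x) = λ·Φ(x) for all x ∈ ℝ, then ξ = 0 (so AB = BA). In other words, an eigenfunction of H_{A,B} given by a finite expansion mixing two different Gaussian scales α ≠ β can exist only in the commutative case ξ = 0. -/

import Mathlib

open Polynomial

/-- The matrix `A = [[a, ξ], [conj ξ, c]]`. -/
noncomputable def Amat (a c : ℝ) (ξ : ℂ) : Matrix (Fin 2) (Fin 2) ℂ :=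
  !![(a : ℂ), ξ; (starRingEnd ℂ) ξ, (c : ℂ)]

/-- The matrix `B = [[1, 0], [0, b]]`. -/
noncomputable def Bmat (b : ℝ) : Matrix (Fin 2) (Fin 2) ℂ :=
  !![1, 0; 0, (b : ℂ)]

/-- "Logarithmic derivative shift": `D_γ r = r' - γ X r`, the polynomial such that
`(r(x) e^{-γx²/2})' = (D_γ r)(x) e^{-γx²/2}`. -/
noncomputable def Dg (γ : ℝ) (r : Polynomial ℂ) : Polynomial ℂ :=
  derivative r - C (γ : ℂ) * X * r

lemma hasDerivAt_gauss (γ : ℝ) (r : Polynomial ℂ) (x : ℝ) :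
    HasDerivAt (fun x : ℝ => r.eval (x : ℂ) * ((Real.exp (-γ * x ^ 2 / 2) : ℝ) : ℂ))
      ((Dg γ r).eval (x : ℂ) * ((Real.exp (-γ * x ^ 2 / 2) : ℝ) : ℂ)) x := by
  have h1 : HasDerivAt (fun x : ℝ => r.eval (x : ℂ)) (r.derivative.eval (x : ℂ)) x := by
    simpa using (r.hasDerivAt (x : ℂ)).comp_ofReal
  have harg : HasDerivAt (fun x : ℝ => -γ * x ^ 2 / 2) (-γ * x) x := by
    have := ((hasDerivAt_pow 2 x).const_mul (-γ)).div_const 2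
    refine this.congr_deriv ?_
    ring
  have h2 : HasDerivAt (fun x : ℝ => Real.exp (-γ * x ^ 2 / 2))
      (Real.exp (-γ * x ^ 2 / 2) * (-γ * x)) x := harg.exp
  have h2c : HasDerivAt (fun x : ℝ => ((Real.exp (-γ * x ^ 2 / 2) : ℝ) : ℂ))
      (((Real.exp (-γ * x ^ 2 / 2) * (-γ * x) : ℝ) : ℂ)) x := h2.ofReal_comp
  have := h1.mul h2c
  refine this.congr_deriv ?_
  simp [Dg]
  push_cast
  ring

lemma eq_zero_of_eval_real_zero (P : Polynomial ℂ) (h : ∀ x : ℝ, P.eval (x : ℂ) = 0) :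
    P = 0 := by
  apply P.eq_zero_of_infinite_isRoot
  apply Set.Infinite.mono (s := Set.range (fun x : ℝ => (x : ℂ)))
  · rintro z ⟨x, rfl⟩; exact h x
  · exact Set.infinite_range_of_injective Complex.ofReal_injective

/-- Key lemma: a nontrivial polynomial combination of two Gaussians with different scales
cannot vanish identically. -/
lemma key_gaussians (α β : ℝ) (hαβ : α ≠ β) (P Q : Polynomial ℂ)
    (h : ∀ x : ℝ, P.eval (x : ℂ) * ((Real.exp (-α * x ^ 2 / 2) : ℝ) : ℂ)
        + Q.eval (x : ℂ) * ((Real.exp (-β * x ^ 2 / 2) : ℝ) : ℂ) = 0) :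
    P = 0 ∧ Q = 0 := by
  -- first derive the derivative identity
  have hder : ∀ x : ℝ, (Dg α P).eval (x : ℂ) * ((Real.exp (-α * x ^ 2 / 2) : ℝ) : ℂ)
      + (Dg β Q).eval (x : ℂ) * ((Real.exp (-β * x ^ 2 / 2) : ℝ) : ℂ) = 0 := by
    intro x
    have hF : HasDerivAt (fun x : ℝ => P.eval (x : ℂ) * ((Real.exp (-α * x ^ 2 / 2) : ℝ) : ℂ)
        + Q.eval (x : ℂ) * ((Real.exp (-β * x ^ 2 / 2) : ℝ) : ℂ))
        ((Dg α P).eval (x : ℂ) * ((Real.exp (-α * x ^ 2 / 2) : ℝ) : ℂ)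
          + (Dg β Q).eval (x : ℂ) * ((Real.exp (-β * x ^ 2 / 2) : ℝ) : ℂ)) x :=
      (hasDerivAt_gauss α P x).add (hasDerivAt_gauss β Q x)
    have hzero : (fun x : ℝ => P.eval (x : ℂ) * ((Real.exp (-α * x ^ 2 / 2) : ℝ) : ℂ)
        + Q.eval (x : ℂ) * ((Real.exp (-β * x ^ 2 / 2) : ℝ) : ℂ)) = fun _ => (0 : ℂ) :=
      funext h
    rw [hzero] at hF
    exact hF.unique (hasDerivAt_const x 0)
  -- eliminate the β-Gaussian
  have hpoly : P * Dg β Q - Dg α P * Q = 0 := by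
    apply eq_zero_of_eval_real_zero
    intro x
    have h1 := h x
    have h2 := hder x
    have hEα : ((Real.exp (-α * x ^ 2 / 2) : ℝ) : ℂ) ≠ 0 := by
      simpa using (Real.exp_pos _).ne'
    have hEβ : ((Real.exp (-β * x ^ 2 / 2) : ℝ) : ℂ) ≠ 0 := by
      simpa using (Real.exp_pos _).ne'
    have key : (P.eval (x : ℂ) * (Dg β Q).eval (x : ℂ)
        - (Dg α P).eval (x : ℂ) * Q.eval (x : ℂ)) * ((Real.exp (-α * x ^ 2 / 2) : ℝ) : ℂ) = 0 := by
      linear_combination (Dg β Q).eval (x : ℂ) * h1 - Q.eval (x : ℂ) * h2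
    have := mul_eq_zero.mp key
    simp only [Polynomial.eval_sub, Polynomial.eval_mul]
    tauto
  -- suppose both nonzero: degree contradiction
  have hPQ : P = 0 ∨ Q = 0 := by
    by_contra hcon
    push_neg at hcon
    obtain ⟨hP, hQ⟩ := hcon
    have hrel : P * derivative Q - derivative P * Q = C ((β : ℂ) - α) * (X * (P * Q)) := by
      simp only [Dg] at hpoly
      rw [map_sub]
      linear_combination hpoly
    have hba : ((β : ℂ) - α) ≠ 0 := by
      rw [sub_ne_zero]
      exact_mod_cast fun hh => hαβ ((Complex.ofReal_inj.mp hh).symm)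
    have hT : (C ((β : ℂ) - α) * (X * (P * Q))).natDegree
        = P.natDegree + Q.natDegree + 1 := by
      rw [natDegree_mul (Polynomial.C_ne_zero.mpr hba)
        (mul_ne_zero X_ne_zero (mul_ne_zero hP hQ)),
        natDegree_mul X_ne_zero (mul_ne_zero hP hQ),
        natDegree_mul hP hQ, natDegree_C, natDegree_X]
      ring
    have hle : (P * derivative Q - derivative P * Q).natDegree
        ≤ P.natDegree + Q.natDegree := by
      refine (natDegree_sub_le _ _).trans (max_le ?_ ?_)
      · exact natDegree_mul_le.trans (Nat.add_le_add_left
          ((natDegree_derivative_le Q).trans (Nat.sub_le _ _)) _)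
      · exact natDegree_mul_le.trans (Nat.add_le_add_right
          ((natDegree_derivative_le P).trans (Nat.sub_le _ _)) _)
    rw [hrel, hT] at hle
    omega
  rcases hPQ with h0 | h0
  · refine ⟨h0, eq_zero_of_eval_real_zero _ fun x => ?_⟩
    have hthis := h x
    rw [h0] at hthis
    simp only [Polynomial.eval_zero, zero_mul, zero_add] at hthis
    exact (mul_eq_zero.mp hthis).resolve_right (by
      simpa using (Real.exp_pos (-β * x ^ 2 / 2)).ne')
  · refine ⟨eq_zero_of_eval_real_zero _ fun x => ?_, h0⟩
    have hthis := h x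
    rw [h0] at hthis
    simp only [Polynomial.eval_zero, zero_mul, add_zero] at hthis
    exact (mul_eq_zero.mp hthis).resolve_right (by
      simpa using (Real.exp_pos (-α * x ^ 2 / 2)).ne')

/-- STATEMENT 18: if `Φ(x) = (p(x)e^{-αx²/2}, q(x)e^{-βx²/2})` with polynomials `p, q`
not both zero and distinct Gaussian scales `α ≠ β` satisfies `-BΦ'' + x²AΦ = λΦ`
everywhere, then `ξ = 0` (the commutative case). -/
theorem mixed_scales_eigenfunction_implies_xi_zero
    (a c b : ℝ) (ξ : ℂ) (ha : 0 < a) (hc : 0 < c) (hb : 1 ≤ b)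
    (hξ : ‖ξ‖ ^ 2 < a * c)
    (p q : Polynomial ℂ) (hpq : ¬(p = 0 ∧ q = 0))
    (α β : ℝ) (hα : 0 < α) (hβ : 0 < β) (hαβ : α ≠ β) (l : ℝ)
    (Φ : ℝ → Fin 2 → ℂ)
    (hΦ : Φ = fun x : ℝ => ![p.eval (x : ℂ) * ((Real.exp (-α * x ^ 2 / 2) : ℝ) : ℂ),
                             q.eval (x : ℂ) * ((Real.exp (-β * x ^ 2 / 2) : ℝ) : ℂ)])
    (heq : ∀ x : ℝ, -((Bmat b).mulVec (deriv (deriv Φ) x))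
        + ((x : ℂ) ^ 2) • (Amat a c ξ).mulVec (Φ x) = (l : ℂ) • Φ x) :
    ξ = 0 := by
  subst hΦ
  have hvec : ∀ (r s : Polynomial ℂ) (x : ℝ),
      HasDerivAt (fun x : ℝ => ![r.eval (x : ℂ) * ((Real.exp (-α * x ^ 2 / 2) : ℝ) : ℂ),
                                 s.eval (x : ℂ) * ((Real.exp (-β * x ^ 2 / 2) : ℝ) : ℂ)])
        ![(Dg α r).eval (x : ℂ) * ((Real.exp (-α * x ^ 2 / 2) : ℝ) : ℂ),
          (Dg β s).eval (x : ℂ) * ((Real.exp (-β * x ^ 2 / 2) : ℝ) : ℂ)] x := by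
    intro r s x
    rw [hasDerivAt_pi]
    intro i
    fin_cases i
    · simpa using hasDerivAt_gauss α r x
    · simpa using hasDerivAt_gauss β s x
  have hd1 : deriv (fun x : ℝ =>
      ![p.eval (x : ℂ) * ((Real.exp (-α * x ^ 2 / 2) : ℝ) : ℂ),
        q.eval (x : ℂ) * ((Real.exp (-β * x ^ 2 / 2) : ℝ) : ℂ)])
      = fun x : ℝ => ![(Dg α p).eval (x : ℂ) * ((Real.exp (-α * x ^ 2 / 2) : ℝ) : ℂ),
          (Dg β q).eval (x : ℂ) * ((Real.exp (-β * x ^ 2 / 2) : ℝ) : ℂ)] := by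
    funext x
    exact (hvec p q x).deriv
  have hd2 : ∀ x : ℝ, deriv (deriv (fun x : ℝ =>
      ![p.eval (x : ℂ) * ((Real.exp (-α * x ^ 2 / 2) : ℝ) : ℂ),
        q.eval (x : ℂ) * ((Real.exp (-β * x ^ 2 / 2) : ℝ) : ℂ)])) x
      = ![(Dg α (Dg α p)).eval (x : ℂ) * ((Real.exp (-α * x ^ 2 / 2) : ℝ) : ℂ),
          (Dg β (Dg β q)).eval (x : ℂ) * ((Real.exp (-β * x ^ 2 / 2) : ℝ) : ℂ)] := by
    intro x
    rw [hd1]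
    exact (hvec (Dg α p) (Dg β q) x).deriv
  -- component equations
  have comp0 : ∀ x : ℝ,
      (Polynomial.C (a : ℂ) * Polynomial.X ^ 2 * p - Polynomial.C (l : ℂ) * p
        - Dg α (Dg α p)).eval (x : ℂ) * ((Real.exp (-α * x ^ 2 / 2) : ℝ) : ℂ)
      + (Polynomial.C ξ * Polynomial.X ^ 2 * q).eval (x : ℂ)
          * ((Real.exp (-β * x ^ 2 / 2) : ℝ) : ℂ) = 0 := by
    intro x
    have h0 := congrFun (heq x) 0
    rw [hd2 x] at h0
    simp only [Bmat, Amat, Matrix.mulVec, dotProduct, Fin.sum_univ_two,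
      Matrix.cons_val', Matrix.cons_val_zero, Matrix.cons_val_one, Matrix.head_cons,
      Matrix.empty_val', Matrix.cons_val_fin_one, Matrix.head_fin_const, Pi.neg_apply,
      Pi.add_apply, Pi.smul_apply, smul_eq_mul, Matrix.of_apply] at h0
    simp only [Polynomial.eval_sub, Polynomial.eval_mul, Polynomial.eval_pow,
      Polynomial.eval_C, Polynomial.eval_X]
    linear_combination h0
  have comp1 : ∀ x : ℝ,
      ((Polynomial.C ((starRingEnd ℂ) ξ) * Polynomial.X ^ 2 * p).eval (x : ℂ))
          * ((Real.exp (-α * x ^ 2 / 2) : ℝ) : ℂ)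
      + (Polynomial.C (c : ℂ) * Polynomial.X ^ 2 * q - Polynomial.C (l : ℂ) * q
        - Polynomial.C (b : ℂ) * Dg β (Dg β q)).eval (x : ℂ)
          * ((Real.exp (-β * x ^ 2 / 2) : ℝ) : ℂ) = 0 := by
    intro x
    have h1 := congrFun (heq x) 1
    rw [hd2 x] at h1
    simp only [Bmat, Amat, Matrix.mulVec, dotProduct, Fin.sum_univ_two,
      Matrix.cons_val', Matrix.cons_val_zero, Matrix.cons_val_one, Matrix.head_cons,
      Matrix.empty_val', Matrix.cons_val_fin_one, Matrix.head_fin_const, Pi.neg_apply,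
      Pi.add_apply, Pi.smul_apply, smul_eq_mul, Matrix.of_apply] at h1
    simp only [Polynomial.eval_sub, Polynomial.eval_mul, Polynomial.eval_pow,
      Polynomial.eval_C, Polynomial.eval_X]
    linear_combination h1
  by_contra hξ0
  have hX2 : (Polynomial.X : Polynomial ℂ) ^ 2 ≠ 0 := pow_ne_zero 2 Polynomial.X_ne_zero
  have hq0 : q = 0 := by
    have hQa := (key_gaussians α β hαβ _ _ comp0).2
    rcases mul_eq_zero.mp hQa with h | h
    · rcases mul_eq_zero.mp h with h' | h'
      · exact absurd (Polynomial.C_eq_zero.mp h') hξ0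
      · exact absurd h' hX2
    · exact h
  have hp0 : p = 0 := by
    have hQb := (key_gaussians α β hαβ _ _ comp1).1
    rcases mul_eq_zero.mp hQb with h | h
    · rcases mul_eq_zero.mp h with h' | h'
      · exact absurd (star_eq_zero.mp (Polynomial.C_eq_zero.mp h')) hξ0
      · exact absurd h' hX2
    · exact h
  exact hpq ⟨hp0, hq0⟩
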